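/- The image of ℤ^n under r equals 𝒩, the set of dominant ν ∈ ℚ^n such that S_n(ν) ∈ ℤ and S_i(ν) ∈ ℤ for every i ∈ {1,…,n−1} with ν_i > ν_{i+1}. -/

import Mathlib

/-- The dominant cone `C = {x ∈ ℝⁿ : x₁ ≥ x₂ ≥ ⋯ ≥ xₙ}`. -/
def domCone (n : ℕ) : Set (EuclideanSpace ℝ (Fin n)) :=
  {x | ∀ i j : Fin n, i ≤ j → x j ≤ x i}

/-- `r` is the map sending each point of `ℝⁿ` to the (unique) closest point
of the dominant cone. -/
def IsClosestPointMap (n : ℕ)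
    (r : EuclideanSpace ℝ (Fin n) → EuclideanSpace ℝ (Fin n)) : Prop :=
  ∀ x, r x ∈ domCone n ∧ ∀ c ∈ domCone n, dist x (r x) ≤ dist x c

/-- `S_k(x) = x₁ + ⋯ + x_k`, the sum of the first `k` coordinates. -/
def psum {n : ℕ} (x : Fin n → ℝ) (k : ℕ) : ℝ :=
  ∑ j ∈ Finset.univ.filter (fun j : Fin n => (j : ℕ) < k), x j

/-- The set `𝒩` of Newton points for `GL_n`: dominant rational `ν` with
`S_n(ν) ∈ ℤ` and `S_i(ν) ∈ ℤ` whenever `ν_i > ν_{i+1}` (`1 ≤ i ≤ n-1`). -/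
def newtonSet (n : ℕ) : Set (EuclideanSpace ℝ (Fin n)) :=
  {ν | (∀ i j : Fin n, i ≤ j → ν j ≤ ν i) ∧
       (∀ i, ∃ q : ℚ, ν i = (q : ℝ)) ∧
       (∃ m : ℤ, psum ν n = (m : ℝ)) ∧
       (∀ i : ℕ, ∀ h1 : 1 ≤ i, ∀ h2 : i < n,
          ν ⟨i, h2⟩ < ν ⟨i - 1, by omega⟩ → ∃ m : ℤ, psum ν i = (m : ℝ))}

namespace Prop5

open Finset

variable {n : ℕ}

/-- Extension of a vector to an ℕ-indexed function, zero beyond `n`. -/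
def ext (y : Fin n → ℝ) : ℕ → ℝ := fun j => if h : j < n then y ⟨j, h⟩ else 0

lemma ext_lt (y : Fin n → ℝ) {j : ℕ} (h : j < n) : ext y j = y ⟨j, h⟩ := dif_pos h

lemma ext_ge (y : Fin n → ℝ) {j : ℕ} (h : n ≤ j) : ext y j = 0 := dif_neg (by omega)

/-- Partial sums, via the extension. -/
def P (y : Fin n → ℝ) (k : ℕ) : ℝ := ∑ j ∈ range k, ext y j

lemma P_succ (y : Fin n → ℝ) (k : ℕ) : P y (k + 1) = P y k + ext y k :=
  Finset.sum_range_succ _ _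

lemma P_zero (y : Fin n → ℝ) : P y 0 = 0 := rfl

lemma sum_ite_range (g : ℕ → ℝ) (hg : ∀ j, n ≤ j → g j = 0) (k : ℕ) :
    ∑ j ∈ range n, (if j < k then g j else 0) = ∑ j ∈ range k, g j := by
  have h1 : ∑ j ∈ range n, (if j < k then g j else 0)
      = ∑ j ∈ range (max n k), (if j < k then g j else 0) := by
    refine Finset.sum_subset (Finset.range_subset_range.2 (le_max_left n k)) ?_
    intro j hj hj'
    simp only [mem_range] at hj hj'
    rw [hg j (by omega)]
    simp
  have h2 : ∑ j ∈ range k, g j = ∑ j ∈ range (max n k), (if j < k then g j else 0) := by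
    rw [show ∑ j ∈ range k, g j = ∑ j ∈ range k, (if j < k then g j else 0) from
      Finset.sum_congr rfl fun j hj => by rw [if_pos (mem_range.1 hj)]]
    refine Finset.sum_subset (Finset.range_subset_range.2 (le_max_right n k)) ?_
    intro j hj hj'
    simp only [mem_range] at hj hj'
    rw [if_neg (by omega)]
  rw [h1, ← h2]

lemma psum_eq (y : Fin n → ℝ) (k : ℕ) : psum y k = P y k := by
  unfold psum P
  rw [Finset.sum_filter]
  have h1 : ∑ j : Fin n, (if (j : ℕ) < k then y j else 0)
      = ∑ j ∈ range n, (if j < k then ext y j else 0) := by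
    rw [← Fin.sum_univ_eq_sum_range (fun j => if j < k then ext y j else 0) n]
    refine Finset.sum_congr rfl fun j _ => ?_
    rw [ext_lt y j.isLt]
  rw [h1, sum_ite_range (ext y) (fun j hj => ext_ge y hj)]

lemma ext_sub (x ν : EuclideanSpace ℝ (Fin n)) (j : ℕ) :
    ext (x - ν) j = ext x j - ext ν j := by
  by_cases h : j < n
  · rw [ext_lt _ h, ext_lt _ h, ext_lt _ h]; simp
  · rw [ext_ge _ (by omega), ext_ge _ (by omega), ext_ge _ (by omega)]; ring

lemma P_sub (x ν : EuclideanSpace ℝ (Fin n)) (k : ℕ) : P (x - ν) k = P x k - P ν k := by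
  unfold P
  rw [← Finset.sum_sub_distrib]
  exact Finset.sum_congr rfl fun j _ => ext_sub x ν j

/-- Abel summation. -/
lemma abel_sum (y : Fin n → ℝ) (c : ℕ → ℝ) (l : ℕ) :
    ∑ j ∈ range (l + 1), ext y j * c j
      = (∑ k ∈ range l, P y (k + 1) * (c k - c (k + 1))) + P y (l + 1) * c l := by
  induction l with
  | zero => simp [P_succ, P_zero]
  | succ l ih =>
    rw [Finset.sum_range_succ, ih, Finset.sum_range_succ, P_succ y (l + 1)]
    ring

open RealInnerProductSpace

lemma inner_eq (y c : EuclideanSpace ℝ (Fin n)) :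
    ⟪y, c⟫ = ∑ j ∈ range n, ext y j * ext c j := by
  rw [← Fin.sum_univ_eq_sum_range (fun j => ext y j * ext c j) n]
  simp only [PiLp.inner_apply, RCLike.inner_apply, conj_trivial]
  refine Finset.sum_congr rfl fun j _ => ?_
  rw [ext_lt _ j.isLt, ext_lt _ j.isLt, mul_comm]

lemma abel_inner (hn : 1 ≤ n) (y c : EuclideanSpace ℝ (Fin n)) :
    ⟪y, c⟫ = (∑ k ∈ range (n - 1), P y (k + 1) * (ext c k - ext c (k + 1)))
      + P y n * ext c (n - 1) := by
  obtain ⟨l, rfl⟩ : ∃ l, n = l + 1 := ⟨n - 1, by omega⟩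
  rw [inner_eq, abel_sum]
  simp

lemma dom_ext {ν : EuclideanSpace ℝ (Fin n)} (hν : ν ∈ domCone n) {k l : ℕ}
    (hkl : k ≤ l) (hl : l < n) : ext ν l ≤ ext ν k := by
  rw [ext_lt _ hl, ext_lt _ (lt_of_le_of_lt hkl hl)]
  exact hν ⟨k, _⟩ ⟨l, _⟩ hkl

/-- Indicator vector of the first `k` coordinates. -/
def vk (n k : ℕ) : EuclideanSpace ℝ (Fin n) := WithLp.toLp 2 (fun j => if (j : ℕ) < k then 1 else 0)

lemma inner_vk (y : EuclideanSpace ℝ (Fin n)) (k : ℕ) (hk : k ≤ n) :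
    ⟪y, vk n k⟫ = P y k := by
  rw [inner_eq]
  have h1 : ∀ j ∈ range n, ext y j * ext (vk n k) j = (if j < k then ext y j else 0) := by
    intro j hj
    have hjn : j < n := mem_range.1 hj
    rw [ext_lt (vk n k) hjn]
    by_cases h : j < k
    · rw [if_pos h, show (vk n k) ⟨j, hjn⟩ = 1 from if_pos h, mul_one]
    · rw [if_neg h, show (vk n k) ⟨j, hjn⟩ = 0 from if_neg h, mul_zero]
  rw [Finset.sum_congr rfl h1, sum_ite_range (ext y) (fun j hj => ext_ge y hj)]
  rfl

lemma add_vk_mem {ν : EuclideanSpace ℝ (Fin n)} (hν : ν ∈ domCone n) (k : ℕ) :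
    ν + vk n k ∈ domCone n := by
  intro i j hij
  have h := hν i j hij
  have hij' : (i : ℕ) ≤ (j : ℕ) := hij
  simp only [PiLp.add_apply]
  show ν j + vk n k j ≤ ν i + vk n k i
  unfold vk
  simp only [WithLp.ofLp_toLp]
  by_cases hj : (j : ℕ) < k
  · rw [if_pos hj, if_pos (by omega)]; linarith
  · rw [if_neg hj]
    by_cases hi : (i : ℕ) < k
    · rw [if_pos hi]; linarith
    · rw [if_neg hi]; linarith

lemma sub_vk_mem {ν : EuclideanSpace ℝ (Fin n)} (hν : ν ∈ domCone n) :
    ν - vk n n ∈ domCone n := by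
  intro i j hij
  have h := hν i j hij
  simp only [PiLp.sub_apply]
  show ν j - vk n n j ≤ ν i - vk n n i
  unfold vk
  simp only [WithLp.ofLp_toLp]
  rw [if_pos j.isLt, if_pos i.isLt]
  linarith

lemma zero_mem : (0 : EuclideanSpace ℝ (Fin n)) ∈ domCone n := by
  intro i j hij
  simp

lemma double_mem {ν : EuclideanSpace ℝ (Fin n)} (hν : ν ∈ domCone n) :
    ν + ν ∈ domCone n := by
  intro i j hij
  have h := hν i j hij
  simp only [PiLp.add_apply]
  linarith

/-- The variational inequality for a closest point. -/
lemma vi {x ν : EuclideanSpace ℝ (Fin n)} (hν : ν ∈ domCone n)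
    (hmin : ∀ c ∈ domCone n, dist x ν ≤ dist x c)
    {c : EuclideanSpace ℝ (Fin n)} (hc : c ∈ domCone n) :
    ⟪x - ν, c - ν⟫ ≤ 0 := by
  set p : ℝ := ⟪x - ν, c - ν⟫ with hp
  have key : ∀ t : ℝ, 0 < t → t ≤ 1 → p ≤ t * ‖c - ν‖ ^ 2 / 2 := by
    intro t ht ht1
    have hct : ν + t • (c - ν) ∈ domCone n := by
      intro i j hij
      have h1 := hc i j hij
      have h2 := hν i j hij
      simp only [PiLp.add_apply, PiLp.smul_apply, PiLp.sub_apply, smul_eq_mul]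
      nlinarith
    have hd := hmin _ hct
    rw [dist_eq_norm, dist_eq_norm] at hd
    have hb : x - (ν + t • (c - ν)) = (x - ν) - t • (c - ν) := by abel
    rw [hb] at hd
    have hsq : ‖x - ν‖ ^ 2 ≤ ‖(x - ν) - t • (c - ν)‖ ^ 2 :=
      pow_le_pow_left₀ (norm_nonneg _) hd 2
    have hexp : ‖(x - ν) - t • (c - ν)‖ ^ 2
        = ‖x - ν‖ ^ 2 - 2 * ⟪x - ν, t • (c - ν)⟫ + ‖t • (c - ν)‖ ^ 2 :=
      norm_sub_sq_real _ _
    have hin : ⟪x - ν, t • (c - ν)⟫ = t * p := real_inner_smul_right _ _ _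
    have hnt : ‖t • (c - ν)‖ ^ 2 = t ^ 2 * ‖c - ν‖ ^ 2 := by
      rw [norm_smul, Real.norm_eq_abs, abs_of_pos ht]
      ring
    rw [hexp, hin, hnt] at hsq
    nlinarith
  by_contra hcon
  push_neg at hcon
  have hK : (0 : ℝ) ≤ ‖c - ν‖ ^ 2 := sq_nonneg _
  rcases eq_or_lt_of_le hK with h0 | h0
  · have := key 1 one_pos le_rfl
    rw [← h0] at this
    simp at this
    linarith
  · set t := min 1 (p / ‖c - ν‖ ^ 2) with htdef
    have ht : 0 < t := lt_min one_pos (div_pos hcon h0)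
    have hkey := key t ht (min_le_left _ _)
    have h2 : t * ‖c - ν‖ ^ 2 ≤ p := by
      calc t * ‖c - ν‖ ^ 2 ≤ (p / ‖c - ν‖ ^ 2) * ‖c - ν‖ ^ 2 :=
            mul_le_mul_of_nonneg_right (min_le_right _ _) hK
        _ = p := div_mul_cancel₀ p (ne_of_gt h0)
    nlinarith

/-- Uniqueness of points satisfying the variational inequality. -/
lemma vi_unique {x ν μ : EuclideanSpace ℝ (Fin n)} (hν : ν ∈ domCone n) (hμ : μ ∈ domCone n)
    (h1 : ∀ c ∈ domCone n, ⟪x - ν, c - ν⟫ ≤ 0)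
    (h2 : ∀ c ∈ domCone n, ⟪x - μ, c - μ⟫ ≤ 0) : ν = μ := by
  have a := h1 μ hμ
  have b := h2 ν hν
  have hsplit : (μ - ν) = (x - ν) - (x - μ) := by abel
  have hinner : ⟪μ - ν, μ - ν⟫ ≤ 0 := by
    nth_rewrite 1 [hsplit]
    rw [inner_sub_left]
    have hflip : ⟪x - μ, μ - ν⟫ = -⟪x - μ, ν - μ⟫ := by
      rw [← inner_neg_right]
      congr 1
      abel
    rw [hflip]
    linarith
  have := real_inner_self_nonpos.mp hinner
  have : μ = ν := by
    have h := sub_eq_zero.mp this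
    exact h
  exact this.symm

/-- The Abel expansion of `⟪x - ν, d⟫` in terms of partial sums. -/
lemma inner_expand (hn : 1 ≤ n) (x ν d : EuclideanSpace ℝ (Fin n)) :
    ⟪x - ν, d⟫ = (∑ k ∈ range (n - 1),
        (P x (k + 1) - P ν (k + 1)) * (ext d k - ext d (k + 1)))
      + (P x n - P ν n) * ext d (n - 1) := by
  rw [abel_inner hn, P_sub]
  congr 1
  exact Finset.sum_congr rfl fun k _ => by rw [P_sub]

/-- Sufficiency of the KKT conditions. -/
lemma inner_nonpos_of_kkt (hn : 1 ≤ n) {x ν : EuclideanSpace ℝ (Fin n)} (hν : ν ∈ domCone n)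
    (hsum : P x n = P ν n) (hle : ∀ k, k ≤ n → P x k ≤ P ν k)
    (hjump : ∀ k, k + 1 < n → ext ν (k + 1) < ext ν k → P x (k + 1) = P ν (k + 1))
    {c : EuclideanSpace ℝ (Fin n)} (hc : c ∈ domCone n) : ⟪x - ν, c - ν⟫ ≤ 0 := by
  have hν0 : ⟪x - ν, ν⟫ = 0 := by
    rw [inner_expand hn, hsum, sub_self, zero_mul, add_zero]
    apply Finset.sum_eq_zero
    intro k hk
    have hk' : k + 1 < n := by have := mem_range.1 hk; omega
    rcases lt_or_ge (ext ν (k + 1)) (ext ν k) with h | h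
    · rw [hjump k hk' h, sub_self, zero_mul]
    · have he : ext ν k = ext ν (k + 1) := le_antisymm h (dom_ext hν (Nat.le_succ k) hk')
      rw [he, sub_self, mul_zero]
  have hνc : ⟪x - ν, c⟫ ≤ 0 := by
    rw [inner_expand hn, hsum, sub_self, zero_mul, add_zero]
    apply Finset.sum_nonpos
    intro k hk
    have hk' : k + 1 < n := by have := mem_range.1 hk; omega
    have h1 : P x (k + 1) - P ν (k + 1) ≤ 0 := sub_nonpos.2 (hle (k + 1) (by omega))
    have h2 : 0 ≤ ext c k - ext c (k + 1) := sub_nonneg.2 (dom_ext hc (Nat.le_succ k) hk')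
    nlinarith
  rw [inner_sub_right, hν0]
  linarith

/-- A point satisfying the variational inequality is a closest point. -/
lemma closest_of_vi {x ν : EuclideanSpace ℝ (Fin n)}
    (h : ∀ c ∈ domCone n, ⟪x - ν, c - ν⟫ ≤ 0) :
    ∀ c ∈ domCone n, dist x ν ≤ dist x c := by
  intro c hc
  rw [dist_eq_norm, dist_eq_norm]
  refine le_of_pow_le_pow_left₀ two_ne_zero (norm_nonneg _) ?_
  have he : x - c = (x - ν) - (c - ν) := by abel
  have hexp : ‖(x - ν) - (c - ν)‖ ^ 2
      = ‖x - ν‖ ^ 2 - 2 * ⟪x - ν, c - ν⟫ + ‖c - ν‖ ^ 2 := norm_sub_sq_real _ _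
  rw [he, hexp]
  have h1 := h c hc
  nlinarith [sq_nonneg ‖c - ν‖]

/-- Necessity of the KKT conditions. -/
lemma kkt_of_min (hn : 1 ≤ n) {x ν : EuclideanSpace ℝ (Fin n)} (hν : ν ∈ domCone n)
    (hmin : ∀ c ∈ domCone n, dist x ν ≤ dist x c) :
    P x n = P ν n ∧ (∀ k, k ≤ n → P x k ≤ P ν k) ∧
    (∀ k, k + 1 < n → ext ν (k + 1) < ext ν k → P x (k + 1) = P ν (k + 1)) := by
  have hvi : ∀ c ∈ domCone n, ⟪x - ν, c - ν⟫ ≤ 0 := fun c hc => vi hν hmin hc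
  have hle : ∀ k, k ≤ n → P x k ≤ P ν k := by
    intro k hk
    have h1 := hvi _ (add_vk_mem hν k)
    have h2 : (ν + vk n k) - ν = vk n k := by abel
    rw [h2, inner_vk _ k hk, P_sub] at h1
    linarith
  have hge : P ν n ≤ P x n := by
    have h1 := hvi _ (sub_vk_mem hν)
    have h2 : (ν - vk n n) - ν = -(vk n n) := by abel
    rw [h2, inner_neg_right, inner_vk _ n le_rfl, P_sub] at h1
    linarith
  have hsum : P x n = P ν n := le_antisymm (hle n le_rfl) hge
  refine ⟨hsum, hle, ?_⟩
  have hν0 : ⟪x - ν, ν⟫ = 0 := by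
    have h1 := hvi _ (double_mem hν)
    have h2 : (ν + ν) - ν = ν := by abel
    rw [h2] at h1
    have h3 := hvi _ zero_mem
    have h4 : (0 : EuclideanSpace ℝ (Fin n)) - ν = -ν := by abel
    rw [h4, inner_neg_right] at h3
    linarith
  rw [inner_expand hn, hsum, sub_self, zero_mul, add_zero] at hν0
  intro k hk hlt
  have hterm : ∀ j ∈ range (n - 1),
      (P x (j + 1) - P ν (j + 1)) * (ext ν j - ext ν (j + 1)) ≤ 0 := by
    intro j hj
    have hj' : j + 1 < n := by have := mem_range.1 hj; omega
    have h1 : P x (j + 1) - P ν (j + 1) ≤ 0 := sub_nonpos.2 (hle (j + 1) (by omega))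
    have h2 : 0 ≤ ext ν j - ext ν (j + 1) := sub_nonneg.2 (dom_ext hν (Nat.le_succ j) hj')
    nlinarith
  have hz := (Finset.sum_eq_zero_iff_of_nonpos hterm).1 hν0 k (mem_range.2 (by omega))
  rcases mul_eq_zero.1 hz with h | h
  · linarith [sub_eq_zero.1 h]
  · exfalso
    have : ext ν (k + 1) = ext ν k := by linarith [sub_eq_zero.1 h]
    linarith

lemma P_int {x : EuclideanSpace ℝ (Fin n)} (hx : ∀ i, ∃ m : ℤ, x i = (m : ℝ)) (k : ℕ) :
    ∃ m : ℤ, P x k = (m : ℝ) := by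
  induction k with
  | zero => exact ⟨0, by rw [P_zero]; simp⟩
  | succ k ih =>
    obtain ⟨m, hm⟩ := ih
    by_cases h : k < n
    · obtain ⟨m', hm'⟩ := hx ⟨k, h⟩
      exact ⟨m + m', by rw [P_succ, hm, ext_lt x h, hm']; push_cast; ring⟩
    · exact ⟨m, by rw [P_succ, hm, ext_ge x (by omega), add_zero]⟩

end Prop5

open Prop5 RealInnerProductSpace

/-- Proposition 1.1(5) for `GL_n`: `r(ℤⁿ) = 𝒩`. -/
theorem stmt_5 (n : ℕ) (hn : 1 ≤ n)
    (r : EuclideanSpace ℝ (Fin n) → EuclideanSpace ℝ (Fin n))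
    (hr : IsClosestPointMap n r) :
    r '' {x : EuclideanSpace ℝ (Fin n) | ∀ i, ∃ m : ℤ, x i = (m : ℝ)} = newtonSet n := by
  classical
  ext ν
  simp only [Set.mem_image, Set.mem_setOf_eq]
  constructor
  · rintro ⟨x, hx, rfl⟩
    obtain ⟨hνC, hmin⟩ := hr x
    obtain ⟨hsum, hle, hjump⟩ := kkt_of_min hn hνC hmin
    have hPxint := P_int hx
    -- the jump partial sums of r x are integers
    have hjmpint : ∀ k : ℕ, k + 1 < n → ext (r x) (k + 1) < ext (r x) k →
        ∃ m : ℤ, P (r x) (k + 1) = (m : ℝ) := by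
      intro k hk hlt
      obtain ⟨m, hm⟩ := hPxint (k + 1)
      exact ⟨m, by rw [← hjump k hk hlt]; exact hm⟩
    have htotint : ∃ m : ℤ, P (r x) n = (m : ℝ) := by
      obtain ⟨m, hm⟩ := hPxint n
      exact ⟨m, by rw [← hsum]; exact hm⟩
    refine ⟨hνC, ?_, ?_, ?_⟩
    · -- rationality
      intro i
      have hi : (i : ℕ) < n := i.isLt
      -- a : start of the constant block
      have Ha : ∃ k, k ≤ (i : ℕ) ∧ ext (r x) k = ext (r x) (i : ℕ) := ⟨(i : ℕ), le_rfl, rfl⟩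
      set a := Nat.find Ha with hadef
      obtain ⟨ha1, ha2⟩ := Nat.find_spec Ha
      have haP : ∃ m : ℤ, P (r x) a = (m : ℝ) := by
        rcases Nat.eq_zero_or_pos a with h0 | h0
        · exact ⟨0, by rw [h0, P_zero]; simp⟩
        · have hne : ¬(a - 1 ≤ (i : ℕ) ∧ ext (r x) (a - 1) = ext (r x) (i : ℕ)) :=
            Nat.find_min Ha (by omega)
          have h3 : ext (r x) (a - 1) ≠ ext (r x) (i : ℕ) := fun h => hne ⟨by omega, h⟩
          have h4 : ext (r x) a ≤ ext (r x) (a - 1) :=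
            dom_ext hνC (by omega) (by omega)
          have h5 : ext (r x) a < ext (r x) (a - 1) := by
            rcases lt_or_eq_of_le h4 with h | h
            · exact h
            · exact absurd (h ▸ ha2) h3
          obtain ⟨k, hk⟩ : ∃ k, a = k + 1 := ⟨a - 1, by omega⟩
          have h6 : ext (r x) (k + 1) < ext (r x) k := by
            rw [← hk]
            have : a - 1 = k := by omega
            rw [← this]
            exact h5
          obtain ⟨m, hm⟩ := hjmpint k (by omega) h6
          exact ⟨m, by rw [hk]; exact hm⟩
      -- cI : end of the constant block
      have Hc : ∃ k, (i : ℕ) < k ∧ (n ≤ k ∨ ext (r x) k ≠ ext (r x) (i : ℕ)) :=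
        ⟨n, hi, Or.inl le_rfl⟩
      set cI := Nat.find Hc with hcdef
      obtain ⟨hc1, hc2⟩ := Nat.find_spec Hc
      have hcn : cI ≤ n := Nat.find_le ⟨hi, Or.inl le_rfl⟩
      have hmid : ∀ j, (i : ℕ) < j → j < cI → ext (r x) j = ext (r x) (i : ℕ) := by
        intro j hj1 hj2
        have hmin' := Nat.find_min Hc hj2
        push_neg at hmin'
        exact (hmin' hj1).2
      have hcP : ∃ m : ℤ, P (r x) cI = (m : ℝ) := by
        rcases eq_or_lt_of_le hcn with he | hlt
        · rw [he]; exact htotint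
        · have hne : ext (r x) cI ≠ ext (r x) (i : ℕ) := hc2.resolve_left (by omega)
          have hprev : ext (r x) (cI - 1) = ext (r x) (i : ℕ) := by
            rcases eq_or_lt_of_le (Nat.succ_le_of_lt hc1) with he2 | hlt2
            · have : cI - 1 = (i : ℕ) := by omega
              rw [this]
            · exact hmid (cI - 1) (by omega) (by omega)
          have h4 : ext (r x) cI ≤ ext (r x) (cI - 1) :=
            dom_ext hνC (by omega) hlt
          have h5 : ext (r x) cI < ext (r x) (cI - 1) := by
            rcases lt_or_eq_of_le h4 with h | h
            · exact h
            · exact absurd (h ▸ hprev) hne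
          obtain ⟨k, hk⟩ : ∃ k, cI = k + 1 := ⟨cI - 1, by omega⟩
          have h6 : ext (r x) (k + 1) < ext (r x) k := by
            rw [← hk]
            have : cI - 1 = k := by omega
            rw [← this]
            exact h5
          obtain ⟨m, hm⟩ := hjmpint k (by omega) h6
          exact ⟨m, by rw [hk]; exact hm⟩
      -- the block is constant
      have hconst : ∀ j ∈ Finset.Ico a cI, ext (r x) j = ext (r x) (i : ℕ) := by
        intro j hj
        rw [Finset.mem_Ico] at hj
        rcases le_or_gt j (i : ℕ) with h | h
        · have h1 : ext (r x) j ≤ ext (r x) a := dom_ext hνC hj.1 (by omega)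
          have h2 : ext (r x) (i : ℕ) ≤ ext (r x) j := dom_ext hνC h hi
          rw [ha2] at h1
          exact le_antisymm h1 h2
        · exact hmid j h hj.2
      have hac : a ≤ cI := le_trans ha1 (le_of_lt hc1)
      have hsumIco : P (r x) cI - P (r x) a = ((cI - a : ℕ) : ℝ) * ext (r x) (i : ℕ) := by
        have h7 := Finset.sum_Ico_eq_sub (ext (r x)) hac
        rw [Finset.sum_congr rfl hconst, Finset.sum_const, Nat.card_Ico, nsmul_eq_mul] at h7
        unfold P
        linarith [h7]
      obtain ⟨m1, hm1⟩ := haP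
      obtain ⟨m2, hm2⟩ := hcP
      have hd : 0 < cI - a := by omega
      refine ⟨(m2 - m1) / ((cI - a : ℕ) : ℚ), ?_⟩
      have hei : ext (r x) (i : ℕ) = r x i := by rw [ext_lt _ hi]
      rw [← hei]
      rw [hm1, hm2] at hsumIco
      have hdr : ((cI - a : ℕ) : ℝ) ≠ 0 := Nat.cast_ne_zero.2 (by omega)
      rw [show ((((m2 - m1) / ((cI - a : ℕ) : ℚ)) : ℚ) : ℝ)
          = ((m2 : ℝ) - (m1 : ℝ)) / ((cI - a : ℕ) : ℝ) from by push_cast; ring,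
        eq_div_iff hdr]
      linarith [hsumIco]
    · -- total sum integral
      obtain ⟨m, hm⟩ := htotint
      exact ⟨m, by rw [psum_eq]; exact hm⟩
    · -- jump sums integral
      intro i h1 h2 hlt
      obtain ⟨k, rfl⟩ : ∃ k, i = k + 1 := ⟨i - 1, by omega⟩
      have hlt' : ext (r x) (k + 1) < ext (r x) k := by
        rw [ext_lt _ h2, ext_lt _ (by omega : k < n)]
        exact hlt
      obtain ⟨m, hm⟩ := hjmpint k h2 hlt'
      exact ⟨m, by rw [psum_eq]; exact hm⟩
  · intro hν
    obtain ⟨hdom, hrat, ⟨mt, hmt⟩, hjumpN⟩ := hν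
    set x : EuclideanSpace ℝ (Fin n) :=
      WithLp.toLp 2 (fun j : Fin n => ((⌊P ν ((j : ℕ) + 1)⌋ : ℝ) - (⌊P ν (j : ℕ)⌋ : ℝ))) with hxdef
    have hxint : ∀ i, ∃ m : ℤ, x i = (m : ℝ) :=
      fun i => ⟨⌊P ν ((i : ℕ) + 1)⌋ - ⌊P ν (i : ℕ)⌋, by push_cast; rfl⟩
    have hPx : ∀ k, k ≤ n → P x k = (⌊P ν k⌋ : ℝ) := by
      intro k
      induction k with
      | zero => intro _; rw [P_zero, P_zero]; simp
      | succ k ih =>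
        intro hk
        have hkn : k < n := by omega
        rw [P_succ, ih (by omega), ext_lt x hkn]
        have hxk : x ⟨k, hkn⟩ = (⌊P ν (k + 1)⌋ : ℝ) - (⌊P ν k⌋ : ℝ) := rfl
        rw [hxk]
        ring
    have hPνn : P ν n = (mt : ℝ) := by rw [← psum_eq]; exact hmt
    have hsum : P x n = P ν n := by rw [hPx n le_rfl, hPνn, Int.floor_intCast]
    have hle : ∀ k, k ≤ n → P x k ≤ P ν k := fun k hk => by
      rw [hPx k hk]; exact Int.floor_le _
    have hjump : ∀ k, k + 1 < n → ext ν (k + 1) < ext ν k → P x (k + 1) = P ν (k + 1) := by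
      intro k hk hlt
      obtain ⟨m, hm⟩ := hjumpN (k + 1) (by omega) hk (by
        rw [ext_lt _ hk, ext_lt _ (by omega : k < n)] at hlt
        exact hlt)
      rw [psum_eq] at hm
      rw [hPx _ (by omega), hm, Int.floor_intCast]
    have hνvi : ∀ c ∈ domCone n, ⟪x - ν, c - ν⟫ ≤ 0 :=
      fun c hc => inner_nonpos_of_kkt hn hdom hsum hle hjump hc
    obtain ⟨hrC, hrmin⟩ := hr x
    have hrvi : ∀ c ∈ domCone n, ⟪x - r x, c - r x⟫ ≤ 0 :=
      fun c hc => vi hrC hrmin hc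
    exact ⟨x, hxint, (vi_unique hdom hrC hνvi hrvi).symm⟩
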